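/- Fix a directed edge e and let S be the set of rooted loops that visit both e and −e at least once. For ℓ ∈ S of length n, let l be the smallest index with ℓ_l = e or ℓ_l = −e, let m be the largest index with ℓ_m = −ℓ_l, and define ℓ' = ℓ_{1,l} ⊕ (ℓ_{l,m})⁻¹ ⊕ ℓ_{m,n+1}. Then the map ℓ ↦ ℓ' is an involution of S, |ℓ'| = |ℓ|, and λ(ℓ') = −λ(ℓ). -/

import Mathlib

open scoped BigOperators

/-- The straight line segment drawn for an (unordered) edge, given the
positions of the vertices in the complex plane. -/
def segOf {α : Type*} (pos : α → ℂ) : Sym2 α → Set ℂ :=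
  Sym2.lift ⟨fun u v => segment ℝ (pos u) (pos v), fun u v => segment_symm ℝ (pos u) (pos v)⟩

/-- A finite graph embedded in the complex plane: vertices are distinct points
of `ℂ`, edges are unordered pairs of distinct vertices drawn as straight line
segments which pairwise intersect only at common endpoints, and no vertex lies
on an edge which does not contain it. -/
structure PlaneGraph where
  V : Type
  fintypeV : Fintype V
  decEqV : DecidableEq V
  pos : V → ℂ
  pos_inj : Function.Injective pos
  E : Finset (Sym2 V)
  not_diag : ∀ e ∈ E, ¬ e.IsDiag
  edges_meet : ∀ e₁ ∈ E, ∀ e₂ ∈ E, e₁ ≠ e₂ → ∀ p : ℂ,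
    p ∈ segOf pos e₁ → p ∈ segOf pos e₂ → ∃ w : V, w ∈ e₁ ∧ w ∈ e₂ ∧ p = pos w
  vertex_on_edge : ∀ e ∈ E, ∀ w : V, pos w ∈ segOf pos e → w ∈ e

attribute [instance] PlaneGraph.fintypeV PlaneGraph.decEqV

namespace PlaneGraph

variable (G : PlaneGraph)

/-- A directed edge: an ordered pair of vertices whose underlying
unordered pair is an edge of the graph. -/
abbrev DEdge : Type := {p : G.V × G.V // s(p.1, p.2) ∈ G.E}

/-- The reversal `-e` of a directed edge. -/
def rev (e : G.DEdge) : G.DEdge :=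
  ⟨(e.val.2, e.val.1), by rw [Sym2.eq_swap]; exact e.property⟩

/-- The undirected version `ē` of a directed edge. -/
def undir (e : G.DEdge) : Sym2 G.V := s(e.val.1, e.val.2)

/-- The turning angle `∠(e,g) = Arg((h_g - t_g)/(h_e - t_e)) ∈ (-π, π]`. -/
noncomputable def tangle (e g : G.DEdge) : ℝ :=
  Complex.arg ((G.pos g.val.2 - G.pos g.val.1) / (G.pos e.val.2 - G.pos e.val.1))

/-- The Kac–Ward transition matrix `Λ`, indexed by directed edges. -/
noncomputable def transMatrix (x : Sym2 G.V → ℝ) : Matrix G.DEdge G.DEdge ℂ :=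
  fun e g =>
    if e.val.2 = g.val.1 ∧ g ≠ G.rev e then
      (x (G.undir e) : ℂ) * Complex.exp (Complex.I / 2 * (G.tangle e g : ℂ))
    else 0

/-- A non-backtracking walk of length `n ≥ 1`, encoded as the list
`(w₁, …, w_{n+1})` of its `n+1` directed edges: consecutive edges are
incident head-to-tail and the walk never immediately reverses an edge. -/
def IsWalk (l : List G.DEdge) : Prop :=
  2 ≤ l.length ∧ l.Chain' (fun e g => e.val.2 = g.val.1 ∧ g ≠ G.rev e)

/-- The length `|w|` (number of steps) of a walk given as a list of edges. -/
def len (l : List G.DEdge) : ℕ := l.length - 1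

/-- The weight `λ(w) = ∏_{i=1}^{n} Λ_{w_i, w_{i+1}}` of a walk. -/
noncomputable def wlam (x : Sym2 G.V → ℝ) (l : List G.DEdge) : ℂ :=
  (List.zipWith (fun e g => G.transMatrix x e g) l l.tail).prod

/-- The edge weight `x(w) = ∏_{i=1}^{n} x_{\bar{w_i}}` of a walk
(the weight of the last edge is not included). -/
def wx (x : Sym2 G.V → ℝ) (l : List G.DEdge) : ℝ :=
  (l.dropLast.map (fun e => x (G.undir e))).prod

/-- The total turning angle `α(w) = Σ_{i=1}^{n} ∠(w_i, w_{i+1})` of a walk. -/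
noncomputable def walpha (l : List G.DEdge) : ℝ :=
  (List.zipWith (fun e g => G.tangle e g) l l.tail).sum

/-- The reversal `w⁻¹ = (-w_{n+1}, …, -w₁)` of a walk. -/
def wrev (l : List G.DEdge) : List G.DEdge := (l.map G.rev).reverse

/-- The concatenation `w ⊕ w'` of two walks, the first ending with the
directed edge with which the second starts. -/
def wconcat (l l' : List G.DEdge) : List G.DEdge := l ++ l'.tail

/-- A (rooted) loop: a walk of length at least `2` which starts and ends
with the same directed edge. -/
def IsLoop (l : List G.DEdge) : Prop :=
  G.IsWalk l ∧ 3 ≤ l.length ∧ l.head? = l.getLast?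

/-- The number of times a loop `ℓ = (ℓ₁, …, ℓ_{n+1})` visits a directed
edge `e`, i.e. the number of occurrences of `e` among `ℓ₁, …, ℓ_n`. -/
def visits (l : List G.DEdge) (e : G.DEdge) : ℕ := l.dropLast.count e

/-- A loop `ℓ` of length `n` is self-avoiding if each vertex appearing in it
appears in exactly two of the directed edges `ℓ₁, …, ℓ_n`. -/
def SelfAvoiding (l : List G.DEdge) : Prop :=
  G.IsLoop l ∧ ∀ v : G.V,
    l.dropLast.countP (fun e => decide (v = e.val.1 ∨ v = e.val.2)) ≠ 0 →
    l.dropLast.countP (fun e => decide (v = e.val.1 ∨ v = e.val.2)) = 2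

/-- The degree of a vertex: the number of edges containing it. -/
def degV (v : G.V) : ℕ := (G.E.filter (fun e => v ∈ e)).card

/-- A finite set of edges is even if every vertex belongs to an even number
of its edges. -/
def IsEvenSet (H : Finset (Sym2 G.V)) : Prop :=
  ∀ v : G.V, Even ((H.filter (fun e => v ∈ e)).card)

instance : DecidablePred G.IsEvenSet := fun H =>
  decidable_of_iff (∀ v : G.V, Even ((H.filter (fun e => v ∈ e)).card)) Iff.rfl

/-- The generating function `Z = Σ_{H even} ∏_{ē ∈ H} x_ē` of even
subgraphs. -/
def Z (x : Sym2 G.V → ℝ) : ℝ :=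
  ∑ H ∈ G.E.powerset.filter G.IsEvenSet, ∏ e ∈ H, x e

end PlaneGraph

namespace PlaneGraph

variable (G : PlaneGraph)

/-- For a loop `ℓ` visiting both `e` and `-e`: let `l` (here `i`, 0-indexed)
be the smallest index with `ℓ_l = e` or `ℓ_l = -e`, let `m` (here `j`,
0-indexed) be the largest index with `ℓ_m = -ℓ_l`, and form
`ℓ' = ℓ_{1,l} ⊕ (ℓ_{l,m})⁻¹ ⊕ ℓ_{m,n+1}`. -/
def flipLoop (e : G.DEdge) (l : List G.DEdge) : List G.DEdge :=
  let i := l.findIdx (fun g => decide (g = e ∨ g = G.rev e))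
  let t := l.getD i e
  let j := l.length - 1 - l.reverse.findIdx (fun g => decide (g = G.rev t))
  G.wconcat (G.wconcat (l.take (i + 1)) (G.wrev ((l.drop i).take (j - i + 1))))
    (l.drop j)

end PlaneGraph

namespace PlaneGraph

variable (G : PlaneGraph)

/-- The turning relation between consecutive edges of a walk. -/
abbrev Rel (a b : G.DEdge) : Prop := a.val.2 = b.val.1 ∧ b ≠ G.rev a

@[simp] lemma rev_rev (a : G.DEdge) : G.rev (G.rev a) = a := rfl

lemma ne_rev_self (a : G.DEdge) : a ≠ G.rev a := by
  intro h
  have hd := G.not_diag _ a.property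
  rw [Sym2.mk_isDiag_iff] at hd
  exact hd (congrArg (fun z => z.val.1) h)

@[simp] lemma undir_rev (a : G.DEdge) : G.undir (G.rev a) = G.undir a := by
  simp [undir, rev, Sym2.eq_swap]

/-- The direction vector of a directed edge. -/
noncomputable def dir (a : G.DEdge) : ℂ := G.pos a.val.2 - G.pos a.val.1

lemma dir_ne_zero (a : G.DEdge) : G.dir a ≠ 0 := by
  have hd := G.not_diag _ a.property
  rw [Sym2.mk_isDiag_iff] at hd
  simp only [dir, sub_ne_zero]
  intro h
  exact hd (G.pos_inj h).symm

@[simp] lemma dir_rev (a : G.DEdge) : G.dir (G.rev a) = - G.dir a := by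
  simp [dir, rev]

lemma tangle_def (a b : G.DEdge) : G.tangle a b = Complex.arg (G.dir b / G.dir a) := rfl

/-- Planarity: the turning angle along a walk step is never `π`. -/
lemma tangle_ne_pi {a b : G.DEdge} (h : G.Rel a b) : G.tangle a b ≠ Real.pi := by
  intro hpi
  rw [tangle_def, Complex.arg_eq_pi_iff] at hpi
  obtain ⟨hre, him⟩ := hpi
  have ha := G.dir_ne_zero a
  have hb := G.dir_ne_zero b
  set z := G.dir b / G.dir a with hzdef
  have hzre : z = (z.re : ℂ) := Complex.ext rfl (by simpa using him)
  set c : ℝ := -z.re with hc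
  have hcpos : 0 < c := by simp only [hc]; linarith
  have hdb : G.dir b = -(c : ℂ) * G.dir a := by
    have : z * G.dir a = G.dir b := div_mul_cancel₀ _ ha
    rw [← this, hzre]; push_cast [hc]; ring
  by_cases huv : G.undir a = G.undir b
  · -- the two edges coincide, forcing b = rev a
    rw [undir, undir, Sym2.eq_iff] at huv
    rcases huv with ⟨h1, _⟩ | ⟨h1, h2⟩
    · -- a.1 = b.1 = a.2, contradicting not_diag
      have hd := G.not_diag _ a.property
      rw [Sym2.mk_isDiag_iff] at hd
      exact hd (h1.trans h.1.symm)
    · exact h.2 (Subtype.ext (Prod.ext h.1.symm h1.symm))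
  · -- two distinct edges overlap, contradicting planarity
    set A1 := G.pos a.val.1 with hA1
    set A2 := G.pos a.val.2 with hA2
    have hposb1 : G.pos b.val.1 = A2 := by rw [← h.1]
    set s : ℝ := min 1 c / 2 with hs
    have hspos : 0 < s := by positivity
    have hsle : s ≤ 1/2 := by
      rw [hs]; have : min 1 c ≤ 1 := min_le_left _ _; linarith
    set u : ℝ := s / c with hu
    have hupos : 0 < u := by positivity
    have hule : u ≤ 1/2 := by
      rw [hu, hs, div_div]
      rw [div_le_iff₀ (by positivity)]
      have : min 1 c ≤ c := min_le_right _ _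
      linarith
    set p : ℂ := (s : ℝ) • A1 + ((1 : ℝ) - s) • A2 with hp
    have hpa : p ∈ segOf G.pos s(a.val.1, a.val.2) := by
      show p ∈ segment ℝ (G.pos a.val.1) (G.pos a.val.2)
      exact ⟨s, 1 - s, le_of_lt hspos, by linarith, by ring, rfl⟩
    have hpb : p ∈ segOf G.pos s(b.val.1, b.val.2) := by
      show p ∈ segment ℝ (G.pos b.val.1) (G.pos b.val.2)
      refine ⟨1 - u, u, by linarith, le_of_lt hupos, by ring, ?_⟩
      have hb2 : G.pos b.val.2 = A2 + G.dir b := by rw [dir, hposb1]; ring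
      have hcc : (c : ℂ) ≠ 0 := by
        simpa using ne_of_gt hcpos
      have huc : (u : ℂ) * c = (s : ℂ) := by
        rw [hu]; push_cast; field_simp
      rw [hposb1, hb2, hdb, dir, hp, ← hA1, ← hA2]
      simp only [Complex.real_smul]
      push_cast
      have : (u : ℂ) * (-(c) * (A2 - A1)) = -(s : ℂ) * (A2 - A1) := by
        rw [← huc]; ring
      linear_combination this
    obtain ⟨w, hw1, hw2, hpw⟩ := G.edges_meet _ a.property _ b.property
      (by simp only [undir] at huv; exact huv) p hpa hpb
    rw [Sym2.mem_iff] at hw1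
    have hA12 : A1 ≠ A2 := by
      intro hq
      exact ha (by rw [dir, ← hA1, ← hA2, hq, sub_self])
    rcases hw1 with hw | hw
    · -- p = A1 forces s = 1
      rw [hw, ← hA1] at hpw
      rw [hp] at hpw
      simp only [Complex.real_smul] at hpw
      push_cast at hpw
      have h1 : ((1 : ℝ) - s) • (A2 - A1) = 0 := by
        simp only [Complex.real_smul]
        push_cast
        linear_combination hpw
      rcases smul_eq_zero.mp h1 with h0 | h0
      · linarith
      · exact hA12 (sub_eq_zero.mp h0).symm
    · -- p = A2 forces s = 0
      rw [hw, ← hA2] at hpw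
      rw [hp] at hpw
      simp only [Complex.real_smul] at hpw
      push_cast at hpw
      have h1 : (s : ℝ) • (A1 - A2) = 0 := by
        simp only [Complex.real_smul]
        push_cast
        linear_combination hpw
      rcases smul_eq_zero.mp h1 with h0 | h0
      · linarith
      · exact hA12 (sub_eq_zero.mp h0)

lemma rel_rev {a b : G.DEdge} (h : G.Rel a b) : G.Rel (G.rev b) (G.rev a) := by
  constructor
  · exact h.1.symm
  · simp only [rev_rev]
    intro hc; exact h.2 (by rw [hc])

lemma tangle_rev_rev {a b : G.DEdge} (h : G.Rel a b) :
    G.tangle (G.rev b) (G.rev a) = - G.tangle a b := by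
  have hb := G.dir_ne_zero b
  have hz : G.dir b / G.dir a ≠ 0 := div_ne_zero hb (G.dir_ne_zero a)
  have hne := G.tangle_ne_pi h
  rw [tangle_def] at hne
  rw [tangle_def, dir_rev, dir_rev, neg_div_neg_eq, ← inv_div (G.dir b) (G.dir a),
    Complex.arg_inv, if_neg hne, tangle_def]

/- ### walpha recursions -/

lemma walpha_nil : G.walpha [] = 0 := rfl

lemma walpha_single (a : G.DEdge) : G.walpha [a] = 0 := rfl

lemma walpha_cons₂ (a b : G.DEdge) (L : List G.DEdge) :
    G.walpha (a :: b :: L) = G.tangle a b + G.walpha (b :: L) := by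
  simp [walpha]

lemma walpha_append_cons (A : List G.DEdge) (t : G.DEdge) (R : List G.DEdge) :
    G.walpha (A ++ t :: R) = G.walpha (A ++ [t]) + G.walpha (t :: R) := by
  induction A with
  | nil => simp [walpha_single]
  | cons a A ih =>
    cases A with
    | nil => simp [walpha_cons₂, walpha_single]
    | cons a' A' =>
      simp only [List.cons_append] at ih ⊢
      rw [walpha_cons₂, walpha_cons₂, ih]
      ring

lemma walpha_concat₂ (X : List G.DEdge) (y z : G.DEdge) :
    G.walpha (X ++ [y, z]) = G.walpha (X ++ [y]) + G.tangle y z := by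
  have := G.walpha_append_cons X y [z]
  simpa [walpha_cons₂, walpha_single] using this

lemma wrev_cons (a : G.DEdge) (L : List G.DEdge) :
    G.wrev (a :: L) = G.wrev L ++ [G.rev a] := by simp [wrev]

lemma walpha_wrev : ∀ (L : List G.DEdge), L.Chain' G.Rel →
    G.walpha (G.wrev L) = - G.walpha L := by
  intro L
  induction L with
  | nil => intro _; simp [wrev, walpha_nil]
  | cons a L ih =>
    cases L with
    | nil => intro _; simp [wrev, walpha_single, walpha_nil]
    | cons b L' =>
      intro hc
      have hab : G.Rel a b := (List.isChain_cons_cons.mp hc).1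
      have htl : (b :: L').Chain' G.Rel := (List.isChain_cons_cons.mp hc).2
      have h1 : G.wrev (a :: b :: L') = (G.wrev L' ++ [G.rev b]) ++ [G.rev a] := by
        simp [wrev_cons]
      rw [h1, List.append_assoc, List.singleton_append,
        G.walpha_concat₂ (G.wrev L') (G.rev b) (G.rev a)]
      have h2 : G.wrev L' ++ [G.rev b] = G.wrev (b :: L') := (G.wrev_cons b L').symm
      rw [h2, ih htl, G.tangle_rev_rev hab, walpha_cons₂]
      ring

/- ### telescoping of exp(I * walpha) -/

noncomputable def nd (a : G.DEdge) : ℂ := G.dir a / ‖G.dir a‖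

lemma nd_ne_zero (a : G.DEdge) : G.nd a ≠ 0 := by
  have := G.dir_ne_zero a
  simp [nd, this]

@[simp] lemma nd_rev (a : G.DEdge) : G.nd (G.rev a) = - G.nd a := by
  simp [nd, neg_div]

lemma exp_tangle (a b : G.DEdge) :
    Complex.exp ((G.tangle a b : ℂ) * Complex.I) = G.nd b / G.nd a := by
  have ha := G.dir_ne_zero a
  have hb := G.dir_ne_zero b
  have hz : G.dir b / G.dir a ≠ 0 := div_ne_zero hb ha
  have h1 := Complex.norm_mul_exp_arg_mul_I (G.dir b / G.dir a)
  have h2 : ((‖G.dir b / G.dir a‖ : ℝ) : ℂ) ≠ 0 := by simpa using hz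
  rw [tangle_def]
  have h3 : Complex.exp (↑(G.dir b / G.dir a).arg * Complex.I)
      = (G.dir b / G.dir a) / ((‖G.dir b / G.dir a‖ : ℝ) : ℂ) := by
    rw [eq_div_iff h2, mul_comm, h1]
  rw [h3, nd, nd]
  have hna : (‖G.dir a‖ : ℂ) ≠ 0 := by simpa using ha
  have hnb : (‖G.dir b‖ : ℂ) ≠ 0 := by simpa using hb
  rw [norm_div]
  push_cast
  field_simp

lemma exp_walpha : ∀ (L : List G.DEdge) (a z : G.DEdge),
    Complex.exp ((G.walpha (a :: L ++ [z]) : ℂ) * Complex.I) = G.nd z / G.nd a := by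
  intro L
  induction L with
  | nil =>
    intro a z
    simpa [walpha_cons₂, walpha_single] using G.exp_tangle a z
  | cons b L ih =>
    intro a z
    have ihb := ih b z
    simp only [List.cons_append] at ihb ⊢
    rw [walpha_cons₂]
    push_cast
    rw [add_mul, Complex.exp_add, G.exp_tangle a b, ihb]
    rw [div_mul_div_comm, mul_comm (G.nd b), ← div_mul_div_comm,
      div_self (G.nd_ne_zero b), mul_one]

/- ### wlam in product form -/

lemma wlam_nil (x : Sym2 G.V → ℝ) : G.wlam x [] = 1 := rfl
lemma wlam_single (x : Sym2 G.V → ℝ) (a : G.DEdge) : G.wlam x [a] = 1 := rfl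

lemma wlam_cons₂ (x : Sym2 G.V → ℝ) (a b : G.DEdge) (L : List G.DEdge) :
    G.wlam x (a :: b :: L) = G.transMatrix x a b * G.wlam x (b :: L) := by
  simp [wlam]

lemma wx_cons₂ (x : Sym2 G.V → ℝ) (a b : G.DEdge) (L : List G.DEdge) :
    G.wx x (a :: b :: L) = x (G.undir a) * G.wx x (b :: L) := by
  simp [wx]

lemma wlam_eq_wx_exp (x : Sym2 G.V → ℝ) :
    ∀ (L : List G.DEdge), L.Chain' G.Rel →
    G.wlam x L = (G.wx x L : ℂ) * Complex.exp (Complex.I / 2 * (G.walpha L : ℂ)) := by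
  intro L
  induction L with
  | nil => intro _; simp [wlam_nil, wx, walpha_nil]
  | cons a L ih =>
    cases L with
    | nil => intro _; simp [wlam_single, wx, walpha_single]
    | cons b L' =>
      intro hc
      have hab : G.Rel a b := (List.isChain_cons_cons.mp hc).1
      rw [wlam_cons₂, wx_cons₂, walpha_cons₂, ih (List.isChain_cons_cons.mp hc).2]
      rw [transMatrix, if_pos hab]
      push_cast
      rw [mul_add, Complex.exp_add]
      ring

/- ### list machinery for the flip -/

lemma findIdx_append_cons (p : G.DEdge → Bool) (A : List G.DEdge) (t : G.DEdge)
    (Z : List G.DEdge) (hA : ∀ g ∈ A, p g = false) (ht : p t = true) :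
    (A ++ t :: Z).findIdx p = A.length := by
  induction A with
  | nil => simp [List.findIdx_cons, ht]
  | cons a A ih =>
    have ha : p a = false := hA a (by simp)
    have := ih (fun g hg => hA g (by simp [hg]))
    simp [List.findIdx_cons, ha, this]

lemma chain'_wrev {K : List G.DEdge} (h : K.Chain' G.Rel) :
    (G.wrev K).Chain' G.Rel := by
  unfold List.Chain' at h ⊢
  rw [wrev, List.isChain_reverse, List.isChain_map]
  exact h.imp (fun a b hab => G.rel_rev hab)

lemma wrev_seg (t : G.DEdge) (B : List G.DEdge) :
    G.wrev (t :: (B ++ [G.rev t])) = t :: ((B.map G.rev).reverse ++ [G.rev t]) := by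
  simp [wrev]

lemma flip_eq (e t : G.DEdge) (A B C : List G.DEdge)
    (hA : ∀ g ∈ A, ¬(g = e ∨ g = G.rev e)) (ht : t = e ∨ t = G.rev e)
    (hC : G.rev t ∉ C) :
    G.flipLoop e (A ++ t :: B ++ G.rev t :: C)
      = A ++ t :: ((B.map G.rev).reverse ++ G.rev t :: C) := by
  set l := A ++ t :: B ++ G.rev t :: C with hldef
  have hl : l = A ++ t :: (B ++ G.rev t :: C) := by simp [hldef]
  have hlen : l.length = A.length + B.length + C.length + 2 := by
    simp [hldef]; omega
  have hi : l.findIdx (fun g => decide (g = e ∨ g = G.rev e)) = A.length := by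
    rw [hl]
    exact G.findIdx_append_cons _ A t _
      (fun g hg => by simpa using hA g hg) (by simpa using ht)
  have hgd : l.getD A.length e = t := by
    rw [List.getD_eq_getElem l e (by omega), List.getElem_of_eq hl,
      List.getElem_append_right (le_refl A.length)]
    simp
  have hrev : l.reverse = C.reverse ++ G.rev t :: (B.reverse ++ t :: A.reverse) := by
    simp [hldef]
  have hr : l.reverse.findIdx (fun g => decide (g = G.rev t)) = C.length := by
    rw [hrev]
    have := G.findIdx_append_cons (fun g => decide (g = G.rev t)) C.reverse (G.rev t)
      (B.reverse ++ t :: A.reverse)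
      (fun g hg => by
        simp only [List.mem_reverse] at hg
        simp only [decide_eq_false_iff_not]
        exact fun hq => hC (hq ▸ hg))
      (by simp)
    simpa using this
  have e1 : l.length - 1 - C.length = A.length + B.length + 1 := by omega
  have e2 : A.length + B.length + 1 - A.length + 1 = B.length + 2 := by omega
  have htake1 : l.take (A.length + 1) = A ++ [t] := by
    rw [hl, List.take_append]
    simp
  have hdrop1 : l.drop A.length = t :: (B ++ G.rev t :: C) := by
    rw [hl, List.drop_append]
    simp
  have htake2 : (t :: (B ++ G.rev t :: C)).take (B.length + 2) = t :: (B ++ [G.rev t]) := by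
    rw [List.take_cons (by omega), List.take_append]
    simp
  have hdrop2 : l.drop (A.length + B.length + 1) = G.rev t :: C := by
    rw [hl, List.drop_append]
    have : A.length + B.length + 1 - A.length = B.length + 1 := by omega
    rw [this]
    simp [List.drop_append]
    omega
  simp only [flipLoop]
  rw [hi, hgd, hr, e1, e2, htake1, hdrop1, htake2, hdrop2, G.wrev_seg t B]
  simp [wconcat]

lemma exists_decomp (e : G.DEdge) (l : List G.DEdge) (hl : G.IsLoop l)
    (he : 1 ≤ G.visits l e) (hre : 1 ≤ G.visits l (G.rev e)) :
    ∃ A t B C, l = A ++ t :: B ++ G.rev t :: C ∧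
      (∀ g ∈ A, ¬(g = e ∨ g = G.rev e)) ∧ (t = e ∨ t = G.rev e) ∧
      G.rev t ∉ C ∧ C ≠ [] := by
  classical
  have hlen3 : 3 ≤ l.length := hl.2.1
  have hnil : l ≠ [] := by intro h; rw [h] at hlen3; simp at hlen3
  have hme : e ∈ l := (List.dropLast_sublist l).mem
    (List.count_pos_iff.mp (by exact_mod_cast he))
  have hmre : G.rev e ∈ l := (List.dropLast_sublist l).mem
    (List.count_pos_iff.mp (by exact_mod_cast hre))
  set p : G.DEdge → Bool := fun g => decide (g = e ∨ g = G.rev e) with hp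
  set i := l.findIdx p with hi
  have hilt : i < l.length := List.findIdx_lt_length_of_exists ⟨e, hme, by simp [hp]⟩
  set t := l[i] with htdef
  have ht : t = e ∨ t = G.rev e := by
    have h0 := @List.findIdx_getElem _ p l hilt
    simp only [hp, decide_eq_true_eq] at h0
    exact h0
  have htne : t ≠ G.rev t := G.ne_rev_self t
  have hmrt : G.rev t ∈ l := by
    rcases ht with h | h
    · rw [h]; exact hmre
    · rw [h, rev_rev]; exact hme
  set q : G.DEdge → Bool := fun g => decide (g = G.rev t) with hq
  set r := l.reverse.findIdx q with hr
  have hrlt : r < l.length := by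
    have : r < l.reverse.length :=
      List.findIdx_lt_length_of_exists ⟨G.rev t, by simpa using hmrt, by simp [hq]⟩
    simpa using this
  set j := l.length - 1 - r with hj
  have hjlt : j < l.length := by omega
  have hjget : l[j] = G.rev t := by
    have h1 : l.reverse[r]'(by simpa using hrlt) = G.rev t := by
      have h0 := @List.findIdx_getElem _ q l.reverse (by simpa using hrlt)
      simp only [hq, decide_eq_true_eq] at h0
      exact h0
    rw [List.getElem_reverse] at h1
    exact h1
  have hpj : p l[j] = true := by
    rw [hjget]
    rcases ht with h | h
    · simp [hp, h]
    · simp [hp, h]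
  have hij : i < j := by
    have hile : i ≤ j := by
      by_contra hcon
      push_neg at hcon
      have := List.not_of_lt_findIdx (by omega : j < l.findIdx p)
      rw [hpj] at this; simp at this
    have : i ≠ j := by
      intro hcon
      apply htne
      have h1 : l[i]? = some t := by rw [List.getElem?_eq_getElem hilt]
      have h2 : l[j]? = some (G.rev t) := by rw [List.getElem?_eq_getElem hjlt, hjget]
      rw [hcon, h2] at h1
      exact Option.some_injective _ h1.symm
    omega
  have hr1 : 1 ≤ r := by
    rcases Nat.eq_zero_or_pos r with h2 | h2
    swap
    · exact h2
    have hj0 : j = l.length - 1 := by omega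
    have h0 : l[l.length - 1]'(by omega) = G.rev t := by
      have h1 : l[j]? = some (G.rev t) := by rw [List.getElem?_eq_getElem hjlt, hjget]
      rw [hj0, List.getElem?_eq_getElem (by omega : l.length - 1 < l.length)] at h1
      exact Option.some_injective _ h1
    have hhead : l[0]'(by omega) = l[l.length - 1]'(by omega) := by
      have h1 := hl.2.2
      rw [List.head?_eq_head hnil, List.getLast?_eq_getLast hnil] at h1
      rw [List.head_eq_getElem, List.getLast_eq_getElem] at h1
      exact Option.some_injective _ h1
    have h00 : l[0]'(by omega) = G.rev t := by rw [hhead]; exact h0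
    have hp0 : p (l[0]'(by omega)) = true := by
      rw [h00]
      rcases ht with h | h
      · simp [hp, h]
      · simp [hp, h]
    have hi0 : i = 0 := by
      by_contra hcon2
      have := List.not_of_lt_findIdx (by omega : 0 < l.findIdx p)
      rw [hp0] at this; simp at this
    exfalso
    apply htne
    have h1 : l[i]? = some t := by rw [List.getElem?_eq_getElem hilt]
    rw [hi0, List.getElem?_eq_getElem (by omega : 0 < l.length)] at h1
    have h3 : l[0]'(by omega) = t := Option.some_injective _ h1
    rw [← h3, h00, rev_rev, ← h00, h3]
  -- now build the decomposition
  have hjlen : j < l.length := hjlt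
  have htakejlen : (l.take j).length = j := by
    rw [List.length_take]; omega
  have hsplit2 : l.take j = l.take i ++ t :: (l.take j).drop (i + 1) := by
    conv_lhs => rw [← List.take_append_drop i (l.take j)]
    rw [List.drop_eq_getElem_cons (by omega : i < (l.take j).length)]
    rw [List.take_take, min_eq_left (le_of_lt hij), List.getElem_take]
  have hsplit : l = l.take i ++ t :: ((l.take j).drop (i + 1) ++ G.rev t :: l.drop (j + 1)) := by
    conv_lhs => rw [← List.take_append_drop j l, List.drop_eq_getElem_cons hjlen, hjget,
      hsplit2]
    simp only [List.cons_append, List.append_assoc]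
  refine ⟨l.take i, t, (l.take j).drop (i + 1), l.drop (j + 1), by simpa using hsplit, ?_, ht, ?_, ?_⟩
  · intro g hg
    obtain ⟨k, hk, hgk⟩ := List.mem_iff_getElem.mp hg
    have hki : k < i := by
      have := hk; rw [List.length_take] at this; omega
    have := List.not_of_lt_findIdx (hi ▸ hki)
    rw [List.getElem_take] at hgk
    rw [hgk] at this
    simpa [hp] using this
  · intro hmem
    obtain ⟨k, hk, hgk⟩ := List.mem_iff_getElem.mp hmem
    rw [List.getElem_drop] at hgk
    have hklen : j + 1 + k < l.length := by
      have := hk; rw [List.length_drop] at this; omega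
    have hlt : l.length - 1 - (j + 1 + k) < r := by omega
    have h5 := List.not_of_lt_findIdx (hr ▸ hlt :
      l.length - 1 - (j + 1 + k) < l.reverse.findIdx q)
    rw [List.getElem_reverse] at h5
    have harith : l.length - 1 - (l.length - 1 - (j + 1 + k)) = j + 1 + k := by omega
    have hidx : l[l.length - 1 - (l.length - 1 - (j + 1 + k))]? = l[j + 1 + k]? := by
      rw [harith]
    rw [List.getElem?_eq_getElem (by omega), List.getElem?_eq_getElem (by omega)] at hidx
    have h6 := Option.some_injective _ hidx
    rw [h6, hgk] at h5
    simp [hq] at h5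
  · rw [Ne, List.drop_eq_nil_iff]
    omega

end PlaneGraph

/-- The map `ℓ ↦ ℓ'` is an involution of the set of loops visiting both a
directed edge `e` and its reversal `-e`; it preserves the length and changes
the sign of the weight: `λ(ℓ') = -λ(ℓ)`. -/
theorem flipLoop_involution (G : PlaneGraph) (x : Sym2 G.V → ℝ) (e : G.DEdge)
    (l : List G.DEdge)
    (hl : G.IsLoop l ∧ 1 ≤ G.visits l e ∧ 1 ≤ G.visits l (G.rev e)) :
    (G.IsLoop (G.flipLoop e l) ∧ 1 ≤ G.visits (G.flipLoop e l) e ∧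
        1 ≤ G.visits (G.flipLoop e l) (G.rev e)) ∧
      G.flipLoop e (G.flipLoop e l) = l ∧
      G.len (G.flipLoop e l) = G.len l ∧
      G.wlam x (G.flipLoop e l) = - G.wlam x l := by
  classical
  obtain ⟨hloop, he, hre⟩ := hl
  obtain ⟨A, t, B, C, hdec0, hA, ht, hC, hCne⟩ := G.exists_decomp e l hloop he hre
  have hdec : l = A ++ t :: (B ++ G.rev t :: C) := by simpa using hdec0
  have hflip : G.flipLoop e l = A ++ t :: ((B.map G.rev).reverse ++ G.rev t :: C) := by
    rw [hdec0]
    have := G.flip_eq e t A B C hA ht hC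
    simpa using this
  obtain ⟨D, z, hCz⟩ : ∃ D z, C = D ++ [z] := by
    rcases List.eq_nil_or_concat C with h | ⟨D, z, h⟩
    · exact absurd h hCne
    · exact ⟨D, z, by simpa [List.concat_eq_append] using h⟩
  -- chain decomposition of the original loop
  have hch : (A ++ ((t :: B) ++ G.rev t :: C)).Chain' G.Rel := by
    have h1 := hloop.1.2
    rw [hdec] at h1
    simpa using h1
  unfold List.Chain' at hch
  rw [List.isChain_append] at hch
  obtain ⟨cA, hch2, linkA⟩ := hch
  rw [List.isChain_append] at hch2
  obtain ⟨cW0, cC, link2⟩ := hch2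
  have cW : (t :: (B ++ [G.rev t])).Chain' G.Rel := by
    unfold List.Chain'
    rw [← List.cons_append, List.isChain_append]
    refine ⟨cW0, List.isChain_singleton _, ?_⟩
    intro xx hx y hy
    simp only [List.head?_cons, Option.mem_some_iff] at hy
    subst hy
    exact link2 xx hx (G.rev t) (by simp)
  have cM : (t :: ((B.map G.rev).reverse ++ [G.rev t])).Chain' G.Rel := by
    have h1 := G.chain'_wrev cW
    rw [G.wrev_seg t B] at h1
    exact h1
  have cMsplit : ((t :: (B.map G.rev).reverse) ++ [G.rev t]).Chain' G.Rel := by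
    simpa using cM
  unfold List.Chain' at cMsplit
  rw [List.isChain_append] at cMsplit
  obtain ⟨cM0, -, linkM⟩ := cMsplit
  -- chain of the flipped loop
  have hch' : (A ++ t :: ((B.map G.rev).reverse ++ G.rev t :: C)).Chain' G.Rel := by
    have hshape : A ++ t :: ((B.map G.rev).reverse ++ G.rev t :: C)
        = A ++ ((t :: (B.map G.rev).reverse) ++ (G.rev t :: C)) := by simp
    unfold List.Chain'
    rw [hshape, List.isChain_append]
    refine ⟨cA, ?_, ?_⟩
    · rw [List.isChain_append]
      refine ⟨cM0, cC, ?_⟩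
      intro xx hx y hy
      simp only [List.head?_cons, Option.mem_some_iff] at hy
      subst hy
      exact linkM xx hx (G.rev t) (by simp)
    · intro xx hx y hy
      simp at hy
      subst hy
      exact linkA xx hx t (by simp)
  have hlenf : (A ++ t :: ((B.map G.rev).reverse ++ G.rev t :: C)).length = l.length := by
    rw [hdec]; simp
  have hlen3 : 3 ≤ l.length := hloop.2.1
  -- head? and getLast? agree with those of l
  have hhead : (A ++ t :: ((B.map G.rev).reverse ++ G.rev t :: C)).head? = l.head? := by
    rw [hdec, List.head?_append, List.head?_append]
    simp
  have hlast : (A ++ t :: ((B.map G.rev).reverse ++ G.rev t :: C)).getLast? = l.getLast? := by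
    rw [hdec, hCz,
      show A ++ t :: ((B.map G.rev).reverse ++ G.rev t :: (D ++ [z]))
        = (A ++ t :: ((B.map G.rev).reverse ++ G.rev t :: D)) ++ [z] by simp,
      show A ++ t :: (B ++ G.rev t :: (D ++ [z]))
        = (A ++ t :: (B ++ G.rev t :: D)) ++ [z] by simp,
      List.getLast?_concat, List.getLast?_concat]
  constructor
  · refine ⟨⟨⟨?_, ?_⟩, ?_, ?_⟩, ?_, ?_⟩
    · rw [hflip, hlenf]; omega
    · rw [hflip]; exact hch'
    · rw [hflip, hlenf]; omega
    · rw [hflip, hhead, hlast, hloop.2.2]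
    · -- visits e
      rw [hflip]
      show 1 ≤ List.count e (A ++ t :: ((B.map G.rev).reverse ++ G.rev t :: C)).dropLast
      have hshape : (A ++ t :: ((B.map G.rev).reverse ++ G.rev t :: C)).dropLast
          = ((A ++ t :: ((B.map G.rev).reverse ++ G.rev t :: D)) ++ [z]).dropLast := by
        rw [hCz]; simp
      rw [hshape, List.dropLast_concat]
      refine List.count_pos_iff.mpr ?_
      rcases ht with h | h
      · rw [← h]; simp
      · have h2 : e = G.rev t := by rw [h, G.rev_rev]
        rw [h2]; simp
    · -- visits (rev e)
      rw [hflip]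
      show 1 ≤ List.count (G.rev e)
        (A ++ t :: ((B.map G.rev).reverse ++ G.rev t :: C)).dropLast
      have hshape : (A ++ t :: ((B.map G.rev).reverse ++ G.rev t :: C)).dropLast
          = ((A ++ t :: ((B.map G.rev).reverse ++ G.rev t :: D)) ++ [z]).dropLast := by
        rw [hCz]; simp
      rw [hshape, List.dropLast_concat]
      refine List.count_pos_iff.mpr ?_
      rcases ht with h | h
      · have h2 : G.rev e = G.rev t := by rw [h]
        rw [h2]; simp
      · rw [← h]; simp
  refine ⟨?_, ?_, ?_⟩
  · -- involution
    rw [hflip]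
    have h2 : ((((B.map G.rev).reverse).map G.rev).reverse) = B := by
      rw [List.map_reverse, List.reverse_reverse, List.map_map]
      simp [Function.comp_def]
    calc G.flipLoop e (A ++ t :: ((B.map G.rev).reverse ++ G.rev t :: C))
        = G.flipLoop e (A ++ t :: (B.map G.rev).reverse ++ G.rev t :: C) := by
          rw [show A ++ t :: ((B.map G.rev).reverse ++ G.rev t :: C)
            = A ++ t :: (B.map G.rev).reverse ++ G.rev t :: C by simp]
      _ = A ++ t :: ((((B.map G.rev).reverse).map G.rev).reverse ++ G.rev t :: C) :=
          G.flip_eq e t A ((B.map G.rev).reverse) C hA ht hC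
      _ = l := by rw [h2, ← hdec]
  · -- length
    rw [PlaneGraph.len, PlaneGraph.len, hflip, hlenf]
  · -- weight
    have cl : l.Chain' G.Rel := hloop.1.2
    rw [hflip, G.wlam_eq_wx_exp x _ hch', G.wlam_eq_wx_exp x l cl]
    -- edge-weight part
    have hwx : G.wx x (A ++ t :: ((B.map G.rev).reverse ++ G.rev t :: C)) = G.wx x l := by
      rw [hdec, hCz]
      rw [show A ++ t :: ((B.map G.rev).reverse ++ G.rev t :: (D ++ [z]))
          = (A ++ t :: ((B.map G.rev).reverse ++ G.rev t :: D)) ++ [z] by simp]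
      rw [show A ++ t :: (B ++ G.rev t :: (D ++ [z]))
          = (A ++ t :: (B ++ G.rev t :: D)) ++ [z] by simp]
      rw [PlaneGraph.wx, PlaneGraph.wx, List.dropLast_concat, List.dropLast_concat]
      simp [List.map_reverse, List.map_map, List.prod_reverse, Function.comp_def]
    -- angle part
    have key : ∀ Bx : List G.DEdge,
        G.walpha (A ++ t :: (Bx ++ G.rev t :: C))
          = G.walpha (A ++ [t]) + G.walpha (t :: (Bx ++ [G.rev t]))
            + G.walpha (G.rev t :: C) := by
      intro Bx
      have h1 := G.walpha_append_cons A t (Bx ++ G.rev t :: C)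
      have h2 := G.walpha_append_cons (t :: Bx) (G.rev t) C
      simp only [List.cons_append] at h1 h2
      rw [h1, h2]
      ring
    have hWrev : G.walpha (t :: ((B.map G.rev).reverse ++ [G.rev t]))
        = - G.walpha (t :: (B ++ [G.rev t])) := by
      rw [← G.wrev_seg t B]
      exact G.walpha_wrev _ cW
    have hwa : G.walpha (A ++ t :: ((B.map G.rev).reverse ++ G.rev t :: C))
        = G.walpha l - 2 * G.walpha (t :: (B ++ [G.rev t])) := by
      rw [key ((B.map G.rev).reverse), hWrev, hdec, key B]
      ring
    have hexp : Complex.exp ((G.walpha (t :: (B ++ [G.rev t])) : ℂ) * Complex.I) = -1 := by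
      have h1 := G.exp_walpha B t (G.rev t)
      simp only [List.cons_append] at h1
      rw [h1, PlaneGraph.nd_rev, neg_div, div_self (G.nd_ne_zero t)]
    rw [hwx, hwa]
    push_cast
    rw [show Complex.I / 2 * ((G.walpha l : ℂ) - 2 * (G.walpha (t :: (B ++ [G.rev t])) : ℂ))
        = Complex.I / 2 * (G.walpha l : ℂ)
          + (-((G.walpha (t :: (B ++ [G.rev t])) : ℂ) * Complex.I)) by ring]
    rw [Complex.exp_add, Complex.exp_neg, hexp]
    ring
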